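/- Let q ∈ ℕ with q ≥ 2, let t ∈ (0,1) and z > 0. If R_{z,t,q} has a neutral fixed point at some w_N > 0 (i.e., R_{z,t,q}(w_N) = w_N and R'_{z,t,q}(w_N) = 1), then t ∈ (0, t₂(q)] and z = N₊(t,q) or z = N₋(t,q), where N₊ and N₋ are given by N_±(t,q) = [(−27(q−1)²t⁴ + 18(q²−3q+2)t³ + (q²+14q−14)t² + 2(q−2)t + 1) ± √((t−1)((q−1)t+1)(9(q−1)t²−(q−2)t−1)³)] / (8t((q−2)t+1)³). Moreover, for every t ∈ (0, t₂(q)] both values N₊(t,q) and N₋(t,q) are positive. -/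

import Mathlib

noncomputable section

/-- The renormalization map `R_{z,t,q}(w) = z·((t + w + (q−2)tw)/(1 + (q−1)tw))²`,
viewed as a function of the real variable `w`. -/
def Rmap (z t q : ℝ) (w : ℝ) : ℝ :=
  z * ((t + w + (q - 2) * t * w) / (1 + (q - 1) * t * w)) ^ 2

/-- `t₂(q) = (q − 2 + √(q² + 32q − 32))/(18(q − 1))`. -/
def tTwo (q : ℝ) : ℝ := (q - 2 + Real.sqrt (q ^ 2 + 32 * q - 32)) / (18 * (q - 1))

/-- `N₊(t,q)`. -/
def Nplus (q t : ℝ) : ℝ :=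
  ((-27 * (q - 1) ^ 2 * t ^ 4 + 18 * (q ^ 2 - 3 * q + 2) * t ^ 3
      + (q ^ 2 + 14 * q - 14) * t ^ 2 + 2 * (q - 2) * t + 1)
    + Real.sqrt ((t - 1) * ((q - 1) * t + 1) * (9 * (q - 1) * t ^ 2 - (q - 2) * t - 1) ^ 3))
    / (8 * t * ((q - 2) * t + 1) ^ 3)

/-- `N₋(t,q)`. -/
def Nminus (q t : ℝ) : ℝ :=
  ((-27 * (q - 1) ^ 2 * t ^ 4 + 18 * (q ^ 2 - 3 * q + 2) * t ^ 3
      + (q ^ 2 + 14 * q - 14) * t ^ 2 + 2 * (q - 2) * t + 1)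
    - Real.sqrt ((t - 1) * ((q - 1) * t + 1) * (9 * (q - 1) * t ^ 2 - (q - 2) * t - 1) ^ 3))
    / (8 * t * ((q - 2) * t + 1) ^ 3)

section Aux

private lemma qpos_facts {q : ℝ} (hq : 2 ≤ q) : 0 ≤ q ^ 2 + 32 * q - 32 := by nlinarith

/-- From `t ≤ tTwo q` deduce `g(t) ≤ 0`. -/
private lemma g_nonpos_of_le_tTwo {q t : ℝ} (hq : 2 ≤ q) (ht : 0 < t) (h : t ≤ tTwo q) :
    9 * (q - 1) * t ^ 2 - (q - 2) * t - 1 ≤ 0 := by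
  have hq1 : (0:ℝ) < q - 1 := by linarith
  have hs0 : 0 ≤ Real.sqrt (q ^ 2 + 32 * q - 32) := Real.sqrt_nonneg _
  have hs2 : (Real.sqrt (q ^ 2 + 32 * q - 32)) ^ 2 = q ^ 2 + 32 * q - 32 :=
    Real.sq_sqrt (qpos_facts hq)
  have hle : 18 * (q - 1) * t - (q - 2) ≤ Real.sqrt (q ^ 2 + 32 * q - 32) := by
    rw [tTwo, le_div_iff₀ (by positivity : (0:ℝ) < 18 * (q-1))] at h
    linarith
  rcases le_or_gt (18 * (q - 1) * t - (q - 2)) 0 with hu | hu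
  · nlinarith [mul_pos hq1 ht, mul_pos (mul_pos hq1 ht) ht]
  · nlinarith [mul_le_mul hle hle hu.le hs0, hs2]

/-- From `g(t) ≤ 0` deduce `t ≤ tTwo q`. -/
private lemma le_tTwo_of_g_nonpos {q t : ℝ} (hq : 2 ≤ q) (ht : 0 < t)
    (hg : 9 * (q - 1) * t ^ 2 - (q - 2) * t - 1 ≤ 0) : t ≤ tTwo q := by
  have hq1 : (0:ℝ) < q - 1 := by linarith
  have hs0 : 0 ≤ Real.sqrt (q ^ 2 + 32 * q - 32) := Real.sqrt_nonneg _
  have hs2 : (Real.sqrt (q ^ 2 + 32 * q - 32)) ^ 2 = q ^ 2 + 32 * q - 32 :=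
    Real.sq_sqrt (qpos_facts hq)
  have hle : 18 * (q - 1) * t - (q - 2) ≤ Real.sqrt (q ^ 2 + 32 * q - 32) := by
    rcases le_or_gt (18 * (q - 1) * t - (q - 2)) 0 with hu | hu
    · linarith
    · have hx2 : (18 * (q - 1) * t - (q - 2)) ^ 2 ≤ q ^ 2 + 32 * q - 32 := by nlinarith
      nlinarith [sq_nonneg (18 * (q - 1) * t - (q - 2) - Real.sqrt (q ^ 2 + 32 * q - 32))]
  rw [tTwo, le_div_iff₀ (by positivity : (0:ℝ) < 18 * (q-1))]
  linarith

/-- `t < 1` whenever `g(t) ≤ 0`. -/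
private lemma t_lt_one_of_g {q t : ℝ} (hq : 2 ≤ q) (ht : 0 < t)
    (hg : 9 * (q - 1) * t ^ 2 - (q - 2) * t - 1 ≤ 0) : t < 1 := by
  by_contra h
  push_neg at h
  nlinarith [mul_nonneg (by linarith : (0:ℝ) ≤ q - 2) (by linarith : (0:ℝ) ≤ t - 1),
    mul_nonneg (by linarith : (0:ℝ) ≤ q - 1)
      (mul_nonneg (by linarith : (0:ℝ) ≤ t + 1) (by linarith : (0:ℝ) ≤ t - 1))]

/-- Positivity of the big numerator `M`. -/
private lemma M_pos {q t : ℝ} (hq : 2 ≤ q) (ht : 0 < t)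
    (hg : 9 * (q - 1) * t ^ 2 - (q - 2) * t - 1 ≤ 0) :
    0 < -27 * (q - 1) ^ 2 * t ^ 4 + 18 * (q ^ 2 - 3 * q + 2) * t ^ 3
      + (q ^ 2 + 14 * q - 14) * t ^ 2 + 2 * (q - 2) * t + 1 := by
  have h1 : 0 ≤ 3 * (q - 1) * t ^ 2 * (-(9 * (q - 1) * t ^ 2 - (q - 2) * t - 1)) := by
    have h2 : (0:ℝ) ≤ 3 * (q - 1) * t ^ 2 := by nlinarith
    exact mul_nonneg h2 (by linarith)
  nlinarith [mul_nonneg (mul_nonneg (by linarith : (0:ℝ) ≤ q - 1)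
      (by linarith : (0:ℝ) ≤ q - 2)) (pow_pos ht 3).le,
    mul_pos (mul_pos ht ht) ht, sq_nonneg t, mul_pos ht ht]

/-- Positivity of `N₊` and `N₋` when `g(t) ≤ 0`. -/
private lemma N_pos {q t : ℝ} (hq : 2 ≤ q) (ht : 0 < t)
    (hg : 9 * (q - 1) * t ^ 2 - (q - 2) * t - 1 ≤ 0) :
    0 < Nplus q t ∧ 0 < Nminus q t := by
  have ht1 : t < 1 := t_lt_one_of_g hq ht hg
  have hM := M_pos hq ht hg
  have ha : (0:ℝ) < (q - 2) * t + 1 := by nlinarith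
  have hden : (0:ℝ) < 8 * t * ((q - 2) * t + 1) ^ 3 := by positivity
  have hg3 : (9 * (q - 1) * t ^ 2 - (q - 2) * t - 1) ^ 3 ≤ 0 :=
    Odd.pow_nonpos ⟨1, by norm_num⟩ hg
  have hS0 : 0 ≤ ((t - 1) * ((q - 1) * t + 1) * (9 * (q - 1) * t ^ 2 - (q - 2) * t - 1) ^ 3) := by
    have h1 : (t - 1) * ((q - 1) * t + 1) ≤ 0 := by nlinarith
    have := mul_nonneg (neg_nonneg.2 h1) (neg_nonneg.2 hg3)
    nlinarith [this]
  have hS2 : ((t - 1) * ((q - 1) * t + 1) * (9 * (q - 1) * t ^ 2 - (q - 2) * t - 1) ^ 3) < ((-27 * (q - 1) ^ 2 * t ^ 4 + 18 * (q ^ 2 - 3 * q + 2) * t ^ 3 + (q ^ 2 + 14 * q - 14) * t ^ 2 + 2 * (q - 2) * t + 1)) ^ 2 := by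
    nlinarith [mul_pos (mul_pos (by linarith : (0:ℝ) < q - 1) (mul_pos ht ht)) (pow_pos ha 3)]
  have hsqrtlt : Real.sqrt ((t - 1) * ((q - 1) * t + 1) * (9 * (q - 1) * t ^ 2 - (q - 2) * t - 1) ^ 3) < (-27 * (q - 1) ^ 2 * t ^ 4 + 18 * (q ^ 2 - 3 * q + 2) * t ^ 3 + (q ^ 2 + 14 * q - 14) * t ^ 2 + 2 * (q - 2) * t + 1) := by
    have h := Real.sqrt_lt_sqrt hS0 hS2
    rwa [Real.sqrt_sq hM.le] at h
  have hsqrt0 : 0 ≤ Real.sqrt ((t - 1) * ((q - 1) * t + 1) * (9 * (q - 1) * t ^ 2 - (q - 2) * t - 1) ^ 3) := Real.sqrt_nonneg _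
  constructor
  · exact div_pos (by linarith) hden
  · exact div_pos (by linarith) hden

set_option maxHeartbeats 1600000 in
/-- The main algebraic classification, for real `q`. -/
private lemma part_one {q t z : ℝ} (hq : 2 ≤ q) (ht : 0 < t) (ht1 : t < 1) (hz : 0 < z)
    (hex : ∃ wN : ℝ, 0 < wN ∧ Rmap z t q wN = wN ∧ deriv (Rmap z t q) wN = 1) :
    (9 * (q - 1) * t ^ 2 - (q - 2) * t - 1 ≤ 0) ∧ (z = Nplus q t ∨ z = Nminus q t) := by
  obtain ⟨wN, hw, hfix, hder⟩ := hex
  have hq1 : (0:ℝ) < q - 1 := by linarith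
  have hd : (0:ℝ) < 1 + (q - 1) * t * wN := by positivity
  have hd' : (1 + (q - 1) * t * wN) ≠ 0 := hd.ne'
  have ha2 : (0:ℝ) < (q - 2) * t + 1 := by nlinarith
  -- fixed point equation, cleared of denominators
  have hE1 : z * (t + wN + (q - 2) * t * wN) ^ 2 = wN * (1 + (q - 1) * t * wN) ^ 2 := by
    have h := hfix
    rw [Rmap, div_pow, ← mul_div_assoc] at h
    exact (div_eq_iff (pow_ne_zero 2 hd')).mp h
  -- derivative computation
  have h1 : HasDerivAt (fun w : ℝ => t + w + (q - 2) * t * w) (1 + (q - 2) * t * 1) wN :=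
    ((hasDerivAt_id wN).const_add t).add ((hasDerivAt_id wN).const_mul ((q - 2) * t))
  have h2 : HasDerivAt (fun w : ℝ => 1 + (q - 1) * t * w) ((q - 1) * t * 1) wN :=
    ((hasDerivAt_id wN).const_mul ((q - 1) * t)).const_add 1
  have hdiv : HasDerivAt (fun w : ℝ => (t + w + (q - 2) * t * w) / (1 + (q - 1) * t * w))
      (((1 + (q - 2) * t * 1) * (1 + (q - 1) * t * wN)
        - (t + wN + (q - 2) * t * wN) * ((q - 1) * t * 1)) / (1 + (q - 1) * t * wN) ^ 2) wN :=
    h1.div h2 hd'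
  have hfull : HasDerivAt (Rmap z t q)
      ((2 * z * (t + wN + (q - 2) * t * wN)
        * ((1 + (q - 2) * t) * (1 + (q - 1) * t * wN)
          - (t + wN + (q - 2) * t * wN) * ((q - 1) * t)))
        / (1 + (q - 1) * t * wN) ^ 3) wN := by
    have h := (hdiv.pow 2).const_mul z
    convert h using 1
    any_goals rfl
    push_cast
    field_simp
  have hval := hfull.deriv.symm.trans hder
  have hE2 : 2 * z * (t + wN + (q - 2) * t * wN) * (1 + (q - 2) * t - (q - 1) * t * t)
      = (1 + (q - 1) * t * wN) ^ 3 := by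
    have h6 := (div_eq_iff (pow_ne_zero 3 hd')).mp hval
    linear_combination h6
  -- derive the key quadratic in wN
  have hK0 : (1 + (q - 1) * t * wN) ^ 2 *
      ((t + wN + (q - 2) * t * wN) * (1 + (q - 1) * t * wN)
        - 2 * wN * (1 + (q - 2) * t - (q - 1) * t * t)) = 0 := by
    linear_combination 2 * (1 + (q - 2) * t - (q - 1) * t * t) * hE1
      - (t + wN + (q - 2) * t * wN) * hE2
  have hQw : (q - 1) * t * (1 + (q - 2) * t) * wN ^ 2
      + (3 * (q - 1) * t ^ 2 - (1 + (q - 2) * t)) * wN + t = 0 := by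
    have h := (mul_eq_zero.mp hK0).resolve_left (pow_ne_zero 2 hd')
    linear_combination h
  -- g(t) ≤ 0 via the discriminant
  have hDsq : (2 * ((q - 1) * t * (1 + (q - 2) * t)) * wN
        - (1 + (q - 2) * t - 3 * (q - 1) * t ^ 2)) ^ 2
      = (1 - t) * ((q - 1) * t + 1) * (1 + (q - 2) * t - 9 * (q - 1) * t ^ 2) := by
    linear_combination 4 * ((q - 1) * t * (1 + (q - 2) * t)) * hQw
  have hg : 9 * (q - 1) * t ^ 2 - (q - 2) * t - 1 ≤ 0 := by
    nlinarith [hDsq, sq_nonneg (2 * ((q - 1) * t * (1 + (q - 2) * t)) * wN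
        - (1 + (q - 2) * t - 3 * (q - 1) * t ^ 2)),
      mul_pos (by linarith : (0:ℝ) < 1 - t) (by positivity : (0:ℝ) < (q - 1) * t + 1)]
  refine ⟨hg, ?_⟩
  -- eliminate wN : z satisfies an explicit quadratic
  have hfG : ((1 : ℝ)/2 * t * (t - 1) * ((q - 1) * t + 1)) *
      (8 * t * (1 + (q - 2) * t) ^ 3 * z ^ 2 - 2 * (-27 * (q - 1) ^ 2 * t ^ 4 + 18 * (q ^ 2 - 3 * q + 2) * t ^ 3 + (q ^ 2 + 14 * q - 14) * t ^ 2 + 2 * (q - 2) * t + 1) * z + 8 * (q - 1) * t) = 0 := by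
    linear_combination
      ((1 : ℝ) * q^5 * t^5 * z * wN + (-9 : ℝ) * q^4 * t^5 * z * wN + (4 : ℝ) * q^4 * t^5 * z + (9 : ℝ) * q^4 * t^5 * wN + (4 : ℝ) * q^4 * t^4 * z * wN + (-1 : ℝ) * q^4 * t^4 * z + (-4 : ℝ) * q^4 * t^4 * wN + (32 : ℝ) * q^3 * t^5 * z * wN + (-28 : ℝ) * q^3 * t^5 * z + (-45 : ℝ) * q^3 * t^5 * wN + (27 : ℝ) * q^3 * t^5 + (-28 : ℝ) * q^3 * t^4 * z * wN + (20 : ℝ) * q^3 * t^4 * z + (33 : ℝ) * q^3 * t^4 * wN + (-24 : ℝ) * q^3 * t^4 + (6 : ℝ) * q^3 * t^3 * z * wN + (-4 : ℝ) * q^3 * t^3 * z + (-8 : ℝ) * q^3 * t^3 * wN + (4 : ℝ) * q^3 * t^3 + (-56 : ℝ) * q^2 * t^5 * z * wN + (72 : ℝ) * q^2 * t^5 * z + (81 : ℝ) * q^2 * t^5 * wN + (-81 : ℝ) * q^2 * t^5 + (72 : ℝ) * q^2 * t^4 * z * wN + (-84 : ℝ) * q^2 * t^4 * z + (-79 : ℝ)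 * q^2 * t^4 * wN + (96 : ℝ) * q^2 * t^4 + (-30 : ℝ) * q^2 * t^3 * z * wN + (36 : ℝ) * q^2 * t^3 * z + (32 : ℝ) * q^2 * t^3 * wN + (-44 : ℝ) * q^2 * t^3 + (4 : ℝ) * q^2 * t^2 * z * wN + (-6 : ℝ) * q^2 * t^2 * z + (-4 : ℝ) * q^2 * t^2 * wN + (8 : ℝ) * q^2 * t^2 + (48 : ℝ) * q * t^5 * z * wN + (-80 : ℝ) * q * t^5 * z + (-63 : ℝ) * q * t^5 * wN + (81 : ℝ) * q * t^5 + (-80 : ℝ) * q * t^4 * z * wN + (128 : ℝ) * q * t^4 * z + (75 : ℝ) * q * t^4 * wN + (-120 : ℝ) * q * t^4 + (48 : ℝ) * q * t^3 * z * wN + (-84 : ℝ) * q * t^3 * z + (-40 : ℝ) * q * t^3 * wN + (80 : ℝ) * q * t^3 + (-12 : ℝ) * q * t^2 * z * wN + (28 : ℝ) * q * t^2 * z + (8 : ℝ) * q * t^2 * wN + (-24 : ℝ) * q * t^2 + (1 : ℝ) * q * t * z * wN + (-4 : ℝ) * q * t * z + (4 : ℝ) * q * t + (-16 : ℝ) *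 t^5 * z * wN + (32 : ℝ) * t^5 * z + (18 : ℝ) * t^5 * wN + (-27 : ℝ) * t^5 + (32 : ℝ) * t^4 * z * wN + (-64 : ℝ) * t^4 * z + (-25 : ℝ) * t^4 * wN + (48 : ℝ) * t^4 + (-24 : ℝ) * t^3 * z * wN + (56 : ℝ) * t^3 * z + (16 : ℝ) * t^3 * wN + (-40 : ℝ) * t^3 + (8 : ℝ) * t^2 * z * wN + (-28 : ℝ) * t^2 * z + (-4 : ℝ) * t^2 * wN + (16 : ℝ) * t^2 + (-1 : ℝ) * t * z * wN + (8 : ℝ) * t * z + (-4 : ℝ) * t + (-1 : ℝ) * z) * hE1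
      + ((-1 : ℝ) * q^5 * t^5 * z^2 * wN + (1 : ℝ) * q^5 * t^5 * z * wN^2 + (10 : ℝ) * q^4 * t^5 * z^2 * wN + (-3 : ℝ) * q^4 * t^5 * z^2 + (-8 : ℝ) * q^4 * t^5 * z * wN^2 + (-8 : ℝ) * q^4 * t^5 * z * wN + (9 : ℝ) * q^4 * t^5 * wN^2 + (-5 : ℝ) * q^4 * t^4 * z^2 * wN + (3 : ℝ) * q^4 * t^4 * z * wN^2 + (6 : ℝ) * q^4 * t^4 * z * wN + (-4 : ℝ) * q^4 * t^4 * wN^2 + (-40 : ℝ) * q^3 * t^5 * z^2 * wN + (24 : ℝ) * q^3 * t^5 * z^2 + (25 : ℝ) * q^3 * t^5 * z * wN^2 + (48 : ℝ) * q^3 * t^5 * z * wN + (-21 : ℝ) * q^3 * t^5 * z + (-36 : ℝ) * q^3 * t^5 * wN^2 + (40 : ℝ) * q^3 * t^4 * z^2 * wN + (-12 : ℝ) * q^3 * t^4 * z^2 + (-18 : ℝ) * q^3 * t^4 * z * wN^2 + (-58 : ℝ) * q^3 * t^4 * z * wN + (13 : ℝ) * q^3 * t^4 * z + (20 : ℝ)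 * q^3 * t^4 * wN^2 + (15 : ℝ) * q^3 * t^4 * wN + (-10 : ℝ) * q^3 * t^3 * z^2 * wN + (3 : ℝ) * q^3 * t^3 * z * wN^2 + (18 : ℝ) * q^3 * t^3 * z * wN + (1 : ℝ) * q^3 * t^3 * z + (-4 : ℝ) * q^3 * t^3 * wN^2 + (-8 : ℝ) * q^3 * t^3 * wN + (80 : ℝ) * q^2 * t^5 * z^2 * wN + (-72 : ℝ) * q^2 * t^5 * z^2 + (-38 : ℝ) * q^2 * t^5 * z * wN^2 + (-104 : ℝ) * q^2 * t^5 * z * wN + (84 : ℝ) * q^2 * t^5 * z + (54 : ℝ) * q^2 * t^5 * wN^2 + (-120 : ℝ) * q^2 * t^4 * z^2 * wN + (72 : ℝ) * q^2 * t^4 * z^2 + (39 : ℝ) * q^2 * t^4 * z * wN^2 + (172 : ℝ) * q^2 * t^4 * z * wN + (-86 : ℝ) * q^2 * t^4 * z + (-36 : ℝ) * q^2 * t^4 * wN^2 + (-45 : ℝ) * q^2 * t^4 * wN + (60 : ℝ) * q^2 * t^3 * z^2 * wN + (-18 : ℝ) * q^2 * t^3 * z^2 + (-12 : ℝ) * q^2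 * t^3 * z * wN^2 + (-98 : ℝ) * q^2 * t^3 * z * wN + (20 : ℝ) * q^2 * t^3 * z + (12 : ℝ) * q^2 * t^3 * wN^2 + (32 : ℝ) * q^2 * t^3 * wN + (4 : ℝ) * q^2 * t^3 + (-10 : ℝ) * q^2 * t^2 * z^2 * wN + (1 : ℝ) * q^2 * t^2 * z * wN^2 + (18 : ℝ) * q^2 * t^2 * z * wN + (3 : ℝ) * q^2 * t^2 * z + (-8 : ℝ) * q^2 * t^2 * wN + (-4 : ℝ) * q^2 * t^2 + (-80 : ℝ) * q * t^5 * z^2 * wN + (96 : ℝ) * q * t^5 * z^2 + (28 : ℝ) * q * t^5 * z * wN^2 + (96 : ℝ) * q * t^5 * z * wN + (-105 : ℝ) * q * t^5 * z + (-36 : ℝ) * q * t^5 * wN^2 + (160 : ℝ) * q * t^4 * z^2 * wN + (-144 : ℝ) * q * t^4 * z^2 + (-36 : ℝ) * q * t^4 * z * wN^2 + (-200 : ℝ) * q * t^4 * z * wN + (146 : ℝ) * q * t^4 * z + (28 : ℝ) * q * t^4 * wN^2 + (45 : ℝ) * q * t^4 * wN + (-120 : ℝ) * q * t^3 * z^2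 * wN + (72 : ℝ) * q * t^3 * z^2 + (15 : ℝ) * q * t^3 * z * wN^2 + (160 : ℝ) * q * t^3 * z * wN + (-66 : ℝ) * q * t^3 * z + (-12 : ℝ) * q * t^3 * wN^2 + (-40 : ℝ) * q * t^3 * wN + (-8 : ℝ) * q * t^3 + (40 : ℝ) * q * t^2 * z^2 * wN + (-12 : ℝ) * q * t^2 * z^2 + (-2 : ℝ) * q * t^2 * z * wN^2 + (-54 : ℝ) * q * t^2 * z * wN + (1 : ℝ) * q * t^2 * z + (16 : ℝ) * q * t^2 * wN + (12 : ℝ) * q * t^2 + (-5 : ℝ) * q * t * z^2 * wN + (6 : ℝ) * q * t * z * wN + (3 : ℝ) * q * t * z + (-4 : ℝ) * q * t + (32 : ℝ) * t^5 * z^2 * wN + (-48 : ℝ) * t^5 * z^2 + (-8 : ℝ) * t^5 * z * wN^2 + (-32 : ℝ) * t^5 * z * wN + (42 : ℝ) * t^5 * z + (9 : ℝ) * t^5 * wN^2 + (-80 : ℝ) * t^4 * z^2 * wN + (96 : ℝ) * t^4 * z^2 + (12 : ℝ) * t^4 * z * wN^2 + (80 : ℝ) * t^4 * z * wN + (-73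 : ℝ) * t^4 * z + (-8 : ℝ) * t^4 * wN^2 + (-15 : ℝ) * t^4 * wN + (80 : ℝ) * t^3 * z^2 * wN + (-72 : ℝ) * t^3 * z^2 + (-6 : ℝ) * t^3 * z * wN^2 + (-80 : ℝ) * t^3 * z * wN + (44 : ℝ) * t^3 * z + (4 : ℝ) * t^3 * wN^2 + (16 : ℝ) * t^3 * wN + (4 : ℝ) * t^3 + (-40 : ℝ) * t^2 * z^2 * wN + (24 : ℝ) * t^2 * z^2 + (1 : ℝ) * t^2 * z * wN^2 + (36 : ℝ) * t^2 * z * wN + (-1 : ℝ) * t^2 * z + (-8 : ℝ) * t^2 * wN + (-8 : ℝ) * t^2 + (10 : ℝ) * t * z^2 * wN + (-3 : ℝ) * t * z^2 + (-6 : ℝ) * t * z * wN + (-6 : ℝ) * t * z + (4 : ℝ) * t + (-1 : ℝ) * z^2 * wN + (1 : ℝ) * z) * hQw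
  have hfne : ((1 : ℝ)/2 * t * (t - 1) * ((q - 1) * t + 1)) ≠ 0 := by
    have h1 : (0:ℝ) < (q - 1) * t + 1 := by positivity
    have h3 : (0:ℝ) < t * (1 - t) * ((q - 1) * t + 1) :=
      mul_pos (mul_pos ht (by linarith)) h1
    have h2 : ((1 : ℝ)/2 * t * (t - 1) * ((q - 1) * t + 1)) < 0 := by nlinarith [h3]
    exact h2.ne
  have hGz : 8 * t * (1 + (q - 2) * t) ^ 3 * z ^ 2 - 2 * (-27 * (q - 1) ^ 2 * t ^ 4 + 18 * (q ^ 2 - 3 * q + 2) * t ^ 3 + (q ^ 2 + 14 * q - 14) * t ^ 2 + 2 * (q - 2) * t + 1) * z + 8 * (q - 1) * t = 0 :=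
    (mul_eq_zero.mp hfG).resolve_left hfne
  -- solve the quadratic
  have hsq : (8 * t * (1 + (q - 2) * t) ^ 3 * z - (-27 * (q - 1) ^ 2 * t ^ 4 + 18 * (q ^ 2 - 3 * q + 2) * t ^ 3 + (q ^ 2 + 14 * q - 14) * t ^ 2 + 2 * (q - 2) * t + 1)) ^ 2 = ((t - 1) * ((q - 1) * t + 1) * (9 * (q - 1) * t ^ 2 - (q - 2) * t - 1) ^ 3) := by
    linear_combination (8 * t * (1 + (q - 2) * t) ^ 3) * hGz
  have hsqrt : Real.sqrt ((t - 1) * ((q - 1) * t + 1) * (9 * (q - 1) * t ^ 2 - (q - 2) * t - 1) ^ 3) = |8 * t * (1 + (q - 2) * t) ^ 3 * z - (-27 * (q - 1) ^ 2 * t ^ 4 + 18 * (q ^ 2 - 3 * q + 2) * t ^ 3 + (q ^ 2 + 14 * q - 14) * t ^ 2 + 2 * (q - 2) * t + 1)| := by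
    rw [← hsq, Real.sqrt_sq_eq_abs]
  have hden : (8 * t * ((q - 2) * t + 1) ^ 3) ≠ 0 :=
    mul_ne_zero (mul_ne_zero (by norm_num) ht.ne') (pow_ne_zero 3 ha2.ne')
  rcases abs_cases (8 * t * (1 + (q - 2) * t) ^ 3 * z - (-27 * (q - 1) ^ 2 * t ^ 4 + 18 * (q ^ 2 - 3 * q + 2) * t ^ 3 + (q ^ 2 + 14 * q - 14) * t ^ 2 + 2 * (q - 2) * t + 1)) with ⟨habs, _⟩ | ⟨habs, _⟩
  · left
    rw [Nplus, eq_div_iff hden, hsqrt, habs]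
    ring
  · right
    rw [Nminus, eq_div_iff hden, hsqrt, habs]
    ring

end Aux

/-- **Lemma (neutral fixed points in the ferromagnetic regime).**
For `q ≥ 2` a natural number: if `t ∈ (0,1)`, `z > 0`, and `R_{z,t,q}` has a
neutral fixed point `w_N > 0` (i.e. `R_{z,t,q}(w_N) = w_N` and `R'_{z,t,q}(w_N) = 1`),
then `t ∈ (0, t₂(q)]` and `z = N₊(t,q)` or `z = N₋(t,q)`.  Moreover, for every
`t ∈ (0, t₂(q)]` both values `N₊(t,q)` and `N₋(t,q)` are positive. -/
theorem neutral_fixed_point_classification (q : ℕ) (hq : 2 ≤ q) :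
    (∀ t z : ℝ, 0 < t → t < 1 → 0 < z →
      (∃ wN : ℝ, 0 < wN ∧ Rmap z t q wN = wN ∧ deriv (Rmap z t q) wN = 1) →
      (0 < t ∧ t ≤ tTwo q) ∧ (z = Nplus q t ∨ z = Nminus q t)) ∧
    (∀ t : ℝ, 0 < t → t ≤ tTwo q → 0 < Nplus q t ∧ 0 < Nminus q t) := by
  have hq' : (2:ℝ) ≤ (q:ℝ) := by exact_mod_cast hq
  constructor
  · intro t z ht ht1 hz hex
    obtain ⟨hg, hzz⟩ := part_one hq' ht ht1 hz hex
    exact ⟨⟨ht, le_tTwo_of_g_nonpos hq' ht hg⟩, hzz⟩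
  · intro t ht htt
    exact N_pos hq' ht (g_nonpos_of_le_tTwo hq' ht htt)
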